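/- Let T̂ₖ = R₂ eₖ t₃ᵀ − t₂ eₖᵀ R₃ᵀ be a calibrated trifocal tensor (R₂, R₃ ∈ SO(3,ℂ), t₂, t₃ ∈ ℂ³), set Uₖ = T̂ₖ T̂ₖᵀ, Vₖ = T̂ₖ T̂ₖ₊₁ᵀ + T̂ₖ₊₁ T̂ₖᵀ (indices mod 3), and ψ(X,Y) = trace(X)trace(Y) − 2 trace(XY). Then ψ(U₃ − U₁, U₃ − U₁) − ψ(V₃, V₃) = 0, ψ(U₃ − U₁, V₁) + ψ(V₂, V₃) = 0, and ψ(U₁ − U₂, V₁) = 0. -/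

import Mathlib

open Matrix

private lemma vmv_mul_vmv (u v x y : Fin 3 → ℂ) :
    vecMulVec u v * vecMulVec x y = (v ⬝ᵥ x) • vecMulVec u y := by
  ext i j
  simp only [mul_apply, vecMulVec_apply, Matrix.smul_apply, smul_eq_mul, dotProduct, Finset.sum_mul]
  exact Finset.sum_congr rfl fun k _ => by ring

private lemma trace_vmv (u v : Fin 3 → ℂ) : (vecMulVec u v).trace = u ⬝ᵥ v := by
  simp [Matrix.trace, vecMulVec_apply, dotProduct, Matrix.diag]

private lemma transpose_vmv (u v : Fin 3 → ℂ) : (vecMulVec u v)ᵀ = vecMulVec v u := by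
  ext i j
  simp [vecMulVec_apply, transpose_apply, mul_comm]

set_option maxHeartbeats 2000000 in
theorem stmt_17 (R₂ R₃ : Matrix (Fin 3) (Fin 3) ℂ)
    (hR₂ : R₂ * R₂ᵀ = 1) (hdR₂ : R₂.det = 1)
    (hR₃ : R₃ * R₃ᵀ = 1) (hdR₃ : R₃.det = 1)
    (t₂ t₃ : Fin 3 → ℂ)
    (T : Fin 3 → Matrix (Fin 3) (Fin 3) ℂ)
    (hT : ∀ k, T k = vecMulVec (R₂.mulVec (Pi.single k 1)) t₃ -
        vecMulVec t₂ (R₃.mulVec (Pi.single k 1)))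
    (U V : Fin 3 → Matrix (Fin 3) (Fin 3) ℂ)
    (hU : ∀ k, U k = T k * (T k)ᵀ)
    (hV : ∀ k, V k = T k * (T (k + 1))ᵀ + T (k + 1) * (T k)ᵀ)
    (ψ : Matrix (Fin 3) (Fin 3) ℂ → Matrix (Fin 3) (Fin 3) ℂ → ℂ)
    (hψ : ∀ X Y, ψ X Y = X.trace * Y.trace - 2 * (X * Y).trace) :
    ψ (U 2 - U 0) (U 2 - U 0) - ψ (V 2) (V 2) = 0 ∧
    ψ (U 2 - U 0) (V 0) + ψ (V 1) (V 2) = 0 ∧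
    ψ (U 0 - U 1) (V 0) = 0 := by
  obtain ⟨a, ha⟩ : ∃ a : Fin 3 → Fin 3 → ℂ, ∀ k, a k = R₂ *ᵥ Pi.single k 1 :=
    ⟨_, fun _ => rfl⟩
  obtain ⟨b, hb⟩ : ∃ b : Fin 3 → Fin 3 → ℂ, ∀ k, b k = R₃ *ᵥ Pi.single k 1 :=
    ⟨_, fun _ => rfl⟩
  obtain ⟨d, hd⟩ : ∃ d : Fin 3 → Fin 3 → ℂ, ∀ i j, d i j = if i = j then 1 else 0 :=
    ⟨_, fun _ _ => rfl⟩
  have hT' : ∀ k, T k = vecMulVec (a k) t₃ - vecMulVec t₂ (b k) := by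
    intro k; rw [hT, ha, hb]
  have h2 : R₂ᵀ * R₂ = 1 := mul_eq_one_comm.mp hR₂
  have h3 : R₃ᵀ * R₃ = 1 := mul_eq_one_comm.mp hR₃
  have haa : ∀ k l, a k ⬝ᵥ a l = d k l := by
    intro k l
    have h := congrFun (congrFun h2 k) l
    simp only [mul_apply, transpose_apply, one_apply] at h
    rw [ha, ha, hd]
    simpa [dotProduct, mulVec_single] using h
  have hbb : ∀ k l, b k ⬝ᵥ b l = d k l := by
    intro k l
    have h := congrFun (congrFun h3 k) l
    simp only [mul_apply, transpose_apply, one_apply] at h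
    rw [hb, hb, hd]
    simpa [dotProduct, mulVec_single] using h
  obtain ⟨q, hq⟩ : ∃ q : Fin 3 → ℂ, ∀ k, a k ⬝ᵥ t₂ = q k := ⟨_, fun _ => rfl⟩
  have hq' : ∀ k, t₂ ⬝ᵥ a k = q k := fun k => (dotProduct_comm _ _).trans (hq k)
  obtain ⟨p, hp⟩ : ∃ p : Fin 3 → ℂ, ∀ k, b k ⬝ᵥ t₃ = p k := ⟨_, fun _ => rfl⟩
  have hp' : ∀ k, t₃ ⬝ᵥ b k = p k := fun k => (dotProduct_comm _ _).trans (hp k)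
  have hM : ∀ k l, T k * (T l)ᵀ =
      (t₃ ⬝ᵥ t₃) • vecMulVec (a k) (a l) - p l • vecMulVec (a k) t₂
        - p k • vecMulVec t₂ (a l) + d k l • vecMulVec t₂ t₂ := by
    intro k l
    rw [hT' k, hT' l, transpose_sub, transpose_vmv, transpose_vmv, sub_mul, mul_sub, mul_sub,
      vmv_mul_vmv, vmv_mul_vmv, vmv_mul_vmv, vmv_mul_vmv, hp' l, hp k, hbb k l]
    abel
  have tau : ∀ k l, (T k * (T l)ᵀ).trace =
      d k l * (t₃ ⬝ᵥ t₃ + t₂ ⬝ᵥ t₂) - p l * q k - p k * q l := by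
    intro k l
    rw [hM]
    simp only [trace_sub, trace_add, trace_smul, trace_vmv, smul_eq_mul,
      haa, hq, hq', hp, hp']
    ring
  have sig : ∀ k l m n, ((T k * (T l)ᵀ) * (T m * (T n)ᵀ)).trace =
      (t₃ ⬝ᵥ t₃) * (t₃ ⬝ᵥ t₃) * d l m * d k n - (t₃ ⬝ᵥ t₃) * p n * d l m * q k
        - (t₃ ⬝ᵥ t₃) * p m * q l * d k n
        + (t₃ ⬝ᵥ t₃) * d m n * q l * q k
        - p l * ((t₃ ⬝ᵥ t₃) * q m * d k n - p n * q m * q k - p m * (t₂ ⬝ᵥ t₂) * d k n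
            + d m n * (t₂ ⬝ᵥ t₂) * q k)
        - p k * ((t₃ ⬝ᵥ t₃) * d l m * q n - p n * d l m * (t₂ ⬝ᵥ t₂) - p m * q l * q n
            + d m n * q l * (t₂ ⬝ᵥ t₂))
        + d k l * ((t₃ ⬝ᵥ t₃) * q m * q n - p n * q m * (t₂ ⬝ᵥ t₂) - p m * (t₂ ⬝ᵥ t₂) * q n
            + d m n * (t₂ ⬝ᵥ t₂) * (t₂ ⬝ᵥ t₂)) := by
    intro k l m n
    rw [hM k l, hM m n]
    simp only [sub_mul, mul_sub, add_mul, mul_add, smul_mul_assoc, mul_smul_comm,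
      vmv_mul_vmv, smul_smul, trace_sub, trace_add, trace_smul, trace_vmv, smul_eq_mul,
      haa, hq, hq', hp, hp']
    ring
  have e21 : (2 : Fin 3) + 1 = 0 := rfl
  have e11 : (1 : Fin 3) + 1 = 2 := rfl
  have e01 : (0 : Fin 3) + 1 = 1 := rfl
  have hdiag : ∀ i, d i i = 1 := fun i => by simp [hd]
  have hd01 : d 0 1 = 0 := by simp [hd]
  have hd10 : d 1 0 = 0 := by simp [hd]
  have hd02 : d 0 2 = 0 := by simp [hd]
  have hd20 : d 2 0 = 0 := by simp [hd]
  have hd12 : d 1 2 = 0 := by simp [hd]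
  have hd21 : d 2 1 = 0 := by simp [hd]
  refine ⟨?_, ?_, ?_⟩ <;>
  · simp only [hψ, hU, hV, e21, e11, e01, sub_mul, mul_sub, add_mul, mul_add,
      trace_sub, trace_add]
    simp only [tau, sig, hdiag, hd01, hd10, hd02, hd20, hd12, hd21]
    ring
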